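/- For every positive integer k, the number of natural numbers n with n < 2·3^(k-1) such that the digit 1 occurs nowhere in the last k ternary digits of 2^n (i.e., (2^n / 3^i) % 3 ≠ 1 for all i < k) equals 2^(k-1). -/

import Mathlib

/-- Key lifting-the-exponent fact: `2^(2·3^e) = 1 + 3^(e+1)·m` with `m ≡ 1 [MOD 3]`. -/
lemma two_pow_two_mul_three_pow (e : ℕ) :
    ∃ m : ℕ, 2 ^ (2 * 3 ^ e) = 1 + 3 ^ (e + 1) * m ∧ m % 3 = 1 := by
  induction e with
  | zero => exact ⟨1, by norm_num, rfl⟩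
  | succ e ih =>
    obtain ⟨m, hm, hm3⟩ := ih
    refine ⟨m + 3 ^ (e + 1) * m ^ 2 + 3 ^ (2 * e + 1) * m ^ 3, ?_, ?_⟩
    · have h1 : 2 * 3 ^ (e + 1) = (2 * 3 ^ e) * 3 := by ring
      rw [h1, pow_mul, hm]
      ring
    · have d1 : (3:ℕ) ∣ 3 ^ (e + 1) * m ^ 2 := Dvd.dvd.mul_right (dvd_pow_self 3 (Nat.succ_ne_zero e)) _
      have d2 : (3:ℕ) ∣ 3 ^ (2 * e + 1) * m ^ 3 := Dvd.dvd.mul_right (dvd_pow_self 3 (by omega)) _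
      obtain ⟨a, ha⟩ := d1; obtain ⟨b, hb⟩ := d2
      omega

lemma eq_two_mul_three_pow {d e : ℕ} (h : d ∣ 2 * 3 ^ e) (h1 : ¬ d ∣ 3 ^ e)
    (h2 : e = 0 ∨ ¬ d ∣ 2 * 3 ^ (e - 1)) : d = 2 * 3 ^ e := by
  have h2d : 2 ∣ d := by
    by_contra h2d
    have hcop : Nat.Coprime d 2 :=
      Nat.coprime_comm.mp ((Nat.prime_two.coprime_iff_not_dvd).mpr h2d)
    exact h1 (hcop.dvd_of_dvd_mul_left h)
  obtain ⟨c, rfl⟩ := h2d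
  have hc : c ∣ 3 ^ e := (mul_dvd_mul_iff_left (two_ne_zero)).mp h
  obtain ⟨i, hi, rfl⟩ := (Nat.dvd_prime_pow Nat.prime_three).mp hc
  rcases eq_or_lt_of_le hi with rfl | hlt
  · rfl
  · exfalso
    rcases h2 with rfl | h2
    · omega
    · exact h2 (mul_dvd_mul_left 2 (pow_dvd_pow 3 (by omega)))

/-- Ternary digits below `k` only depend on the residue mod `3^k`. -/
lemma digit_mod {a k i : ℕ} (hik : i < k) : a % 3 ^ k / 3 ^ i % 3 = a / 3 ^ i % 3 := by
  have h1 : (3:ℕ) ^ k = 3 ^ i * 3 ^ (k - i) := by rw [← pow_add]; congr 1; omega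
  rw [h1, Nat.mod_mul_right_div_self, Nat.mod_mod_of_dvd _ (dvd_pow_self 3 (by omega))]

/-- Naturals below `3^k` with no ternary digit equal to 1. -/
def Ufin (k : ℕ) : Finset ℕ := (Finset.range (3 ^ k)).filter (fun m => ∀ i < k, m / 3 ^ i % 3 ≠ 1)

lemma Ufin_card (k : ℕ) : (Ufin k).card = 2 ^ k := by
  induction k with
  | zero => simp [Ufin]
  | succ k ih =>
    have hsplit : Ufin (k + 1)
        = (Ufin k).image (fun m => 3 * m) ∪ (Ufin k).image (fun m => 3 * m + 2) := by
      ext m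
      simp only [Ufin, Finset.mem_union, Finset.mem_image, Finset.mem_filter, Finset.mem_range]
      constructor
      · rintro ⟨hlt, hcond⟩
        have h0 : m % 3 ≠ 1 := by simpa using hcond 0 (Nat.succ_pos k)
        have hq : m / 3 < 3 ^ k := by
          have : (3:ℕ) ^ (k+1) = 3 ^ k * 3 := by ring
          omega
        have hcond' : ∀ i < k, m / 3 / 3 ^ i % 3 ≠ 1 := by
          intro i hi
          have := hcond (i + 1) (by omega)
          rwa [show (3:ℕ) ^ (i+1) = 3 * 3 ^ i by ring, ← Nat.div_div_eq_div_mul] at this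
        have hm3 : m % 3 = 0 ∨ m % 3 = 2 := by omega
        rcases hm3 with hm3 | hm3
        · exact Or.inl ⟨m / 3, ⟨hq, hcond'⟩, by omega⟩
        · exact Or.inr ⟨m / 3, ⟨hq, hcond'⟩, by omega⟩
      · have key : ∀ a, a < 3 ^ k → (∀ i < k, a / 3 ^ i % 3 ≠ 1) → ∀ d, d = 0 ∨ d = 2 →
            3 * a + d < 3 ^ (k+1) ∧ ∀ i < k + 1, (3 * a + d) / 3 ^ i % 3 ≠ 1 := by
          intro a ha hcond d hd
          have hpow : (3:ℕ) ^ (k+1) = 3 ^ k * 3 := by ring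
          refine ⟨by omega, ?_⟩
          intro i hi
          match i with
          | 0 => simpa using by omega
          | (j+1) =>
            have hdiv : (3 * a + d) / 3 ^ (j+1) = a / 3 ^ j := by
              rw [show (3:ℕ) ^ (j+1) = 3 * 3 ^ j by ring, ← Nat.div_div_eq_div_mul]
              congr 1
              omega
            rw [hdiv]
            exact hcond j (by omega)
        rintro (⟨a, ⟨ha, hcond⟩, rfl⟩ | ⟨a, ⟨ha, hcond⟩, rfl⟩)
        · simpa using key a ha hcond 0 (Or.inl rfl)
        · exact key a ha hcond 2 (Or.inr rfl)
    have hdisj : Disjoint ((Ufin k).image (fun m => 3 * m)) ((Ufin k).image (fun m => 3 * m + 2)) := by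
      rw [Finset.disjoint_left]
      rintro x hx hy
      simp only [Finset.mem_image] at hx hy
      obtain ⟨a, _, rfl⟩ := hx
      obtain ⟨b, _, hb⟩ := hy
      omega
    rw [hsplit, Finset.card_union_of_disjoint hdisj,
      Finset.card_image_of_injective _ (fun a b h => by omega),
      Finset.card_image_of_injective _ (fun a b h => by omega), ih]
    ring

lemma Tfin_card (k : ℕ) (hk : 0 < k) :
    ((Finset.range (3 ^ k)).filter (fun m => ¬ 3 ∣ m ∧ ∀ i < k, m / 3 ^ i % 3 ≠ 1)).card
      = 2 ^ (k - 1) := by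
  obtain ⟨j, rfl⟩ : ∃ j, k = j + 1 := ⟨k - 1, (Nat.succ_pred_eq_of_pos hk).symm⟩
  have himg : (Finset.range (3 ^ (j+1))).filter (fun m => ¬ 3 ∣ m ∧ ∀ i < j + 1, m / 3 ^ i % 3 ≠ 1)
      = (Ufin j).image (fun m => 3 * m + 2) := by
    ext m
    simp only [Ufin, Finset.mem_image, Finset.mem_filter, Finset.mem_range]
    constructor
    · rintro ⟨hlt, hnd, hcond⟩
      have h0 : m % 3 ≠ 1 := by simpa using hcond 0 (Nat.succ_pos j)
      have hm3 : m % 3 = 2 := by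
        have : m % 3 ≠ 0 := fun h => hnd (Nat.dvd_of_mod_eq_zero h)
        omega
      have hq : m / 3 < 3 ^ j := by
        have : (3:ℕ) ^ (j+1) = 3 ^ j * 3 := by ring
        omega
      have hcond' : ∀ i < j, m / 3 / 3 ^ i % 3 ≠ 1 := by
        intro i hi
        have := hcond (i + 1) (by omega)
        rwa [show (3:ℕ) ^ (i+1) = 3 * 3 ^ i by ring, ← Nat.div_div_eq_div_mul] at this
      exact ⟨m / 3, ⟨hq, hcond'⟩, by omega⟩
    · rintro ⟨a, ⟨ha, hcond⟩, rfl⟩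
      have hpow : (3:ℕ) ^ (j+1) = 3 ^ j * 3 := by ring
      refine ⟨by omega, by omega, ?_⟩
      intro i hi
      match i with
      | 0 => simpa using by omega
      | (l+1) =>
        have hdiv : (3 * a + 2) / 3 ^ (l+1) = a / 3 ^ l := by
          rw [show (3:ℕ) ^ (l+1) = 3 * 3 ^ l by ring, ← Nat.div_div_eq_div_mul]
          congr 1
          omega
        rw [hdiv]
        exact hcond l (by omega)
  rw [himg, Finset.card_image_of_injective _ (fun a b h => by omega), Ufin_card]
  simp

/-- For every positive integer `k`, the number of naturals `n < 2 * 3 ^ (k - 1)` such that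
the digit `1` occurs nowhere in the last `k` ternary digits of `2 ^ n` equals `2 ^ (k - 1)`. -/
theorem card_two_pow_trailing_no_one (k : ℕ) (hk : 0 < k) :
    ((Finset.range (2 * 3 ^ (k - 1))).filter
      (fun n => ∀ i < k, 2 ^ n / 3 ^ i % 3 ≠ 1)).card = 2 ^ (k - 1) := by
  obtain ⟨j, rfl⟩ : ∃ j, k = j + 1 := ⟨k - 1, (Nat.succ_pred_eq_of_pos hk).symm⟩
  simp only [Nat.add_sub_cancel]
  haveI : NeZero ((3:ℕ) ^ (j + 1)) := ⟨pow_ne_zero _ (by norm_num)⟩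
  set N : ℕ := 3 ^ (j + 1) with hN
  have hNpos : 0 < N := pow_pos (by norm_num) _
  have hcop2 : Nat.Coprime 2 N := Nat.Coprime.pow_right _ (by norm_num)
  have hu : IsUnit (2 : ZMod N) := by
    have := (ZMod.isUnit_iff_coprime 2 N).mpr hcop2
    simpa using this
  set u : (ZMod N)ˣ := hu.unit with hudef
  have huval : (u : ZMod N) = 2 := hu.unit_spec
  -- u ^ (2 * 3 ^ j) = 1
  have hpow1 : u ^ (2 * 3 ^ j) = 1 := by
    ext
    rw [Units.val_pow_eq_pow_val, huval, Units.val_one]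
    obtain ⟨m, hm, _⟩ := two_pow_two_mul_three_pow j
    have h0 : (((3:ℕ) ^ (j + 1) : ℕ) : ZMod N) = 0 := by
      rw [← hN]; exact ZMod.natCast_self N
    have hc : (2 : ZMod N) ^ (2 * 3 ^ j) = ((2 ^ (2 * 3 ^ j) : ℕ) : ZMod N) := by push_cast; ring
    rw [hc, hm, Nat.cast_add, Nat.cast_mul, Nat.cast_one, h0, zero_mul, add_zero]
  have hdvd : orderOf u ∣ 2 * 3 ^ j := orderOf_dvd_of_pow_eq_one hpow1
  have hnd1 : ¬ orderOf u ∣ 3 ^ j := by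
    intro hd
    have h1 : u ^ (3 ^ j) = 1 := orderOf_dvd_iff_pow_eq_one.mp hd
    have h2 : (2 : ZMod N) ^ (3 ^ j) = 1 := by
      have := congrArg (Units.val) h1
      rwa [Units.val_pow_eq_pow_val, huval, Units.val_one] at this
    have h3dvd : (3:ℕ) ∣ N := dvd_pow_self 3 (Nat.succ_ne_zero j)
    have h3 : (2 : ZMod 3) ^ (3 ^ j) = 1 := by
      have := congrArg (ZMod.castHom h3dvd (ZMod 3)) h2
      rwa [map_pow, map_ofNat, map_one] at this
    have hodd : Odd ((3:ℕ) ^ j) := Odd.pow (by decide)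
    rw [show (2 : ZMod 3) = -1 from by decide, hodd.neg_one_pow] at h3
    exact absurd h3 (by decide)
  have hnd2 : j = 0 ∨ ¬ orderOf u ∣ 2 * 3 ^ (j - 1) := by
    rcases Nat.eq_zero_or_pos j with rfl | hj
    · exact Or.inl rfl
    right
    obtain ⟨i, rfl⟩ : ∃ i, j = i + 1 := ⟨j - 1, (Nat.succ_pred_eq_of_pos hj).symm⟩
    simp only [Nat.add_sub_cancel]
    intro hd
    have h1 : u ^ (2 * 3 ^ i) = 1 := orderOf_dvd_iff_pow_eq_one.mp hd
    have h2 : (2 : ZMod N) ^ (2 * 3 ^ i) = 1 := by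
      have := congrArg (Units.val) h1
      rwa [Units.val_pow_eq_pow_val, huval, Units.val_one] at this
    obtain ⟨m, hm, hm3⟩ := two_pow_two_mul_three_pow i
    have h3 : ((3 ^ (i + 1) * m : ℕ) : ZMod N) = 0 := by
      have hcast : ((1 + 3 ^ (i + 1) * m : ℕ) : ZMod N) = 1 := by
        rw [← hm]; push_cast; exact h2
      rw [Nat.cast_add, Nat.cast_one] at hcast
      exact add_eq_left.mp hcast
    rw [ZMod.natCast_eq_zero_iff] at h3
    have h4 : (3:ℕ) ^ (i + 1) * 3 ∣ 3 ^ (i + 1) * m := by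
      have : N = 3 ^ (i + 1) * 3 := by rw [hN]; ring
      rwa [← this]
    have h5 : (3:ℕ) ∣ m := (mul_dvd_mul_iff_left (pow_ne_zero (i+1) (three_ne_zero))).mp h4
    omega
  have horder : orderOf u = 2 * 3 ^ j := eq_two_mul_three_pow hdvd hnd1 hnd2
  -- the subgroup generated by u is everything
  have hcardu : Nat.card (ZMod N)ˣ = 2 * 3 ^ j := by
    rw [Nat.card_eq_fintype_card, ZMod.card_units_eq_totient, hN,
      Nat.totient_prime_pow Nat.prime_three (Nat.succ_pos j)]
    simp [mul_comm]
  have hgen : ∀ v : (ZMod N)ˣ, ∃ n, n < 2 * 3 ^ j ∧ u ^ n = v := by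
    have htop : Subgroup.zpowers u = ⊤ := by
      apply Subgroup.eq_top_of_card_eq
      rw [Nat.card_zpowers, horder, hcardu]
    intro v
    have hv : v ∈ Subgroup.zpowers u := htop ▸ Subgroup.mem_top v
    rw [← mem_powers_iff_mem_zpowers] at hv
    obtain ⟨n, hn⟩ := hv
    refine ⟨n % (2 * 3 ^ j), Nat.mod_lt _ (by positivity), ?_⟩
    rw [← horder, pow_mod_orderOf]
    exact hn
  -- the bijection n ↦ 2 ^ n % N
  have hbij : ((Finset.range (2 * 3 ^ j)).filter
        (fun n => ∀ i < j + 1, 2 ^ n / 3 ^ i % 3 ≠ 1)).card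
      = ((Finset.range (3 ^ (j+1))).filter
        (fun m => ¬ 3 ∣ m ∧ ∀ i < j + 1, m / 3 ^ i % 3 ≠ 1)).card := by
    apply Finset.card_bij (fun n _ => 2 ^ n % N)
    · intro n hn
      simp only [Finset.mem_filter, Finset.mem_range] at hn ⊢
      refine ⟨Nat.mod_lt _ hNpos, ?_, ?_⟩
      · intro h3
        have : (3:ℕ) ∣ 2 ^ n := (Nat.dvd_mod_iff (dvd_pow_self 3 (Nat.succ_ne_zero j))).mp h3
        have := Nat.Prime.dvd_of_dvd_pow Nat.prime_three this
        norm_num at this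
      · intro i hi
        rw [hN, digit_mod hi]
        exact hn.2 i hi
    · intro a ha b hb hab
      simp only [Finset.mem_filter, Finset.mem_range] at ha hb
      have hcast : ((2 ^ a : ℕ) : ZMod N) = ((2 ^ b : ℕ) : ZMod N) := by
        rw [ZMod.natCast_eq_natCast_iff']
        exact hab
      have hupow : u ^ a = u ^ b := by
        ext
        rw [Units.val_pow_eq_pow_val, Units.val_pow_eq_pow_val, huval]
        push_cast at hcast
        exact hcast
      have := pow_injOn_Iio_orderOf (x := u)
        (by rw [horder]; exact Set.mem_Iio.mpr ha.1)
        (by rw [horder]; exact Set.mem_Iio.mpr hb.1) hupow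
      exact this
    · intro m hm
      simp only [Finset.mem_filter, Finset.mem_range] at hm
      obtain ⟨hmlt, hmnd, hmcond⟩ := hm
      have hcopm : Nat.Coprime m N :=
        Nat.Coprime.pow_right _ (Nat.coprime_comm.mp ((Nat.Prime.coprime_iff_not_dvd Nat.prime_three).mpr hmnd))
      obtain ⟨n, hnlt, hn⟩ := hgen (ZMod.unitOfCoprime m hcopm)
      have heq : 2 ^ n % N = m := by
        have hval : (2 : ZMod N) ^ n = (m : ZMod N) := by
          have := congrArg (Units.val) hn
          rwa [Units.val_pow_eq_pow_val, huval, ZMod.coe_unitOfCoprime] at this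
        have : ((2 ^ n : ℕ) : ZMod N) = ((m : ℕ) : ZMod N) := by push_cast; exact hval
        rw [ZMod.natCast_eq_natCast_iff'] at this
        rwa [Nat.mod_eq_of_lt hmlt] at this
      refine ⟨n, ?_, heq⟩
      simp only [Finset.mem_filter, Finset.mem_range]
      refine ⟨hnlt, ?_⟩
      intro i hi
      rw [← digit_mod hi, ← hN, heq]
      exact hmcond i hi
  rw [hbij, Tfin_card (j + 1) (Nat.succ_pos j)]
  simp
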